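/- Let p₁, …, p_k be distinct odd primes each congruent to 2 or 5 modulo 9, let K = ℚ(ω) with ω a primitive third root of unity, and let L = K(∛p₁, …, ∛p_k) be the field obtained from K by adjoining a cube root of each pᵢ (inside a fixed algebraic closure of ℚ). If P is an L-point of the elliptic curve E : y² = x³ + 1 whose order is finite and a power of 3, then P is one of the three points O, (0, 1), (0, −1); in particular every 3-power torsion point of E(L) is defined over K. -/

import Mathlib

/-- The elliptic curve `y² = x³ + 1` over a field `K`, as a Weierstrass curve in affine form. -/
def cubeCurve (K : Type*) [Field K] : WeierstrassCurve.Affine K :=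
  { a₁ := 0, a₂ := 0, a₃ := 0, a₄ := 0, a₆ := 1 }

section Curve

open Polynomial


lemma cube_kummer {F E : Type*} [Field F] [CharZero F] [Field E] [Algebra F E]
    {a : F} (ha : ∀ r : F, r ^ 3 ≠ a) {α : E} (hα : α ^ 3 = algebraMap F E a)
    {β : E} (hβ : β ∈ Algebra.adjoin F {α}) {b : F} (hb : β ^ 3 = algebraMap F E b) :
    ∃ r : F, b = r ^ 3 ∨ b = r ^ 3 * a ∨ b = r ^ 3 * a ^ 2 := by
  have ha0 : a ≠ 0 := fun h => ha 0 (by rw [h]; ring)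
  have hirr : Irreducible (X ^ 3 - C a) :=
    X_pow_sub_C_irreducible_of_prime Nat.prime_three ha
  have hmonic : (X ^ 3 - C a).Monic := monic_X_pow_sub_C a (by norm_num)
  have haev : (Polynomial.aeval α) (X ^ 3 - C a) = 0 := by
    simp [hα]
  have hmin : minpoly F α = X ^ 3 - C a :=
    (minpoly.eq_of_irreducible_of_monic hirr haev hmonic).symm
  -- linear independence of 1, α, α²
  have hind : ∀ u v w : F, algebraMap F E u + algebraMap F E v * α
      + algebraMap F E w * α ^ 2 = 0 → u = 0 ∧ v = 0 ∧ w = 0 := by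
    intro u v w hz
    set R' : F[X] := C u + C v * X + C w * X ^ 2 with hR'
    have hz' : (Polynomial.aeval α) R' = 0 := by simpa [hR'] using hz
    have hdvd := minpoly.dvd F α hz'
    rw [hmin] at hdvd
    have hR0 : R' = 0 := by
      by_contra hne
      have hle : (X ^ 3 - C a).natDegree ≤ R'.natDegree :=
        Polynomial.natDegree_le_of_dvd hdvd hne
      have h3 : (X ^ 3 - C a).natDegree = 3 := natDegree_X_pow_sub_C
      have h2 : R'.natDegree ≤ 2 := by rw [hR']; compute_degree
      omega
    refine ⟨?_, ?_, ?_⟩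
    · have := congrArg (fun q => Polynomial.coeff q 0) hR0
      simpa [hR'] using this
    · have := congrArg (fun q => Polynomial.coeff q 1) hR0
      simpa [hR'] using this
    · have := congrArg (fun q => Polynomial.coeff q 2) hR0
      simpa [hR'] using this
  -- write β = u + v α + w α²
  obtain ⟨g, hg⟩ : ∃ g : F[X], (Polynomial.aeval α) g = β := by
    rwa [← AlgHom.mem_range, ← Algebra.adjoin_singleton_eq_range_aeval]
  set R : F[X] := g %ₘ (X ^ 3 - C a) with hRdef
  have hdeg : R.natDegree < 3 := by
    have := natDegree_modByMonic_lt g hmonic (fun h => by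
      have := congrArg Polynomial.natDegree h
      rw [natDegree_X_pow_sub_C] at this
      simp at this)
    rwa [natDegree_X_pow_sub_C] at this
  have hβR : (Polynomial.aeval α) R = β := by
    rw [hRdef, modByMonic_eq_sub_mul_div g _, map_sub, map_mul, haev, zero_mul,
      sub_zero, hg]
  set u := R.coeff 0
  set v := R.coeff 1
  set w := R.coeff 2
  have hbeta : β = algebraMap F E u + algebraMap F E v * α + algebraMap F E w * α ^ 2 := by
    rw [← hβR, Polynomial.aeval_eq_sum_range' hdeg]
    simp [Finset.sum_range_succ, Algebra.smul_def]
    rfl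
  -- expand β³
  have hexp : β ^ 3 = algebraMap F E (u^3 + a*v^3 + a^2*w^3 + 6*a*u*v*w)
      + algebraMap F E (3*(u^2*v + a*u*w^2 + a*v^2*w)) * α
      + algebraMap F E (3*(u^2*w + u*v^2 + a*v*w^2)) * α ^ 2 := by
    rw [hbeta]
    simp only [map_add, map_mul, map_pow, map_ofNat]
    push_cast
    linear_combination (algebraMap F E v ^ 3 + 6 * algebraMap F E u * algebraMap F E v
        * algebraMap F E w + algebraMap F E w ^ 3 * (α ^ 3 + algebraMap F E a)
        + 3 * algebraMap F E w * (algebraMap F E u * algebraMap F E w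
          + algebraMap F E v ^ 2) * α
        + 3 * algebraMap F E v * algebraMap F E w ^ 2 * α ^ 2) * hα
  obtain ⟨e0, e1, e2⟩ := hind (u^3 + a*v^3 + a^2*w^3 + 6*a*u*v*w - b)
      (3*(u^2*v + a*u*w^2 + a*v^2*w)) (3*(u^2*w + u*v^2 + a*v*w^2)) (by
    rw [map_sub]
    linear_combination hb - hexp)
  have e0' : u^3 + a*v^3 + a^2*w^3 + 6*a*u*v*w = b := by linear_combination e0
  have e1' : u^2*v + a*u*w^2 + a*v^2*w = 0 := by linear_combination (1/3 : F) * e1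
  have e2' : u^2*w + u*v^2 + a*v*w^2 = 0 := by linear_combination (1/3 : F) * e2
  by_cases hu : u = 0
  · by_cases hv : v = 0
    · exact ⟨w, Or.inr <| Or.inr <| by
        linear_combination -e0' + (u^2 + 6*a*v*w) * hu + (a*v^2) * hv⟩
    · have hw : w = 0 := by
        have h' : a * (v^2 * w) = 0 := by linear_combination e1' - (u*v + a*w^2) * hu
        rcases mul_eq_zero.mp h' with h | h
        · exact absurd h ha0
        · rcases mul_eq_zero.mp h with h | h
          · exact absurd (pow_eq_zero_iff two_ne_zero |>.mp h) hv
          · exact h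
      exact ⟨v, Or.inr <| Or.inl <| by
        linear_combination -e0' + (u^2 + 6*a*v*w) * hu + (a^2*w^2) * hw⟩
  · by_cases hv : v = 0
    · have hw : w = 0 := by
        have h' : (a * u) * w^2 = 0 := by linear_combination e1' - (u^2 + a*v*w) * hv
        rcases mul_eq_zero.mp h' with h | h
        · rcases mul_eq_zero.mp h with h | h
          · exact absurd h ha0
          · exact absurd h hu
        · exact pow_eq_zero_iff two_ne_zero |>.mp h
      exact ⟨u, Or.inl <| by
        linear_combination -e0' + (a*v^2 + 6*a*u*w) * hv + (a^2*w^2) * hw⟩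
    · by_cases hw : w = 0
      · exfalso
        have h' : u * v^2 = 0 := by linear_combination e2' - (u^2 + a*v*w) * hw
        rcases mul_eq_zero.mp h' with h | h
        · exact absurd h hu
        · exact absurd (pow_eq_zero_iff two_ne_zero |>.mp h) hv
      · -- u(v³ - a w³) = 0 with u ≠ 0 gives a = (v/w)³, contradiction
        exfalso
        have hkey : u * (v^3 - a*w^3) = 0 := by linear_combination v * e2' - w * e1'
        have h2 : v^3 - a*w^3 = 0 := by
          rcases mul_eq_zero.mp hkey with h | h
          · exact absurd h hu
          · exact h
        exact ha (v / w) (by field_simp; linear_combination h2)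

open IntermediateField in
lemma tower_cube_classify {k : ℕ} {p : Fin k → ℕ} (hinj : Function.Injective p)
    (hp : ∀ i, (p i).Prime)
    {L : Type*} [Field L] [Algebra ℚ L] {ω : L} {c : Fin k → L}
    (hc : ∀ i, c i ^ 3 = (p i : L)) (hω2 : ω ^ 2 + ω + 1 = 0) :
    ∀ (n : ℕ), n ≤ k → ∀ q : ℚ,
    (∃ β : L, β ∈ IntermediateField.adjoin ℚ ({ω} ∪ c '' {i : Fin k | (i : ℕ) < n}) ∧
      β ^ 3 = algebraMap ℚ L q) →
    ∃ (r : ℚ) (N : ℕ), N ≠ 0 ∧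
      (∀ pp : ℕ, pp.Prime → pp ∣ N → ∃ i : Fin k, (i : ℕ) < n ∧ p i = pp) ∧
      q = r ^ 3 * N := by
  intro n
  induction n with
  | zero =>
    intro _ q ⟨β, hmem, hq⟩
    have hempty : {i : Fin k | (i : ℕ) < 0} = ∅ := by ext j; simp
    rw [hempty, Set.image_empty, Set.union_empty] at hmem
    have hω3L : ω ^ 3 = 1 := by linear_combination (ω - 1) * hω2
    have hωint : IsIntegral ℚ ω := by
      refine ⟨X ^ 2 + X + 1, by monicity!, ?_⟩
      simp only [eval₂_add, eval₂_pow, eval₂_X, eval₂_one]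
      linear_combination hω2
    have hmonic : (X ^ 2 + X + 1 : ℚ[X]).Monic := by monicity!
    have haev : (Polynomial.aeval ω) (X ^ 2 + X + 1 : ℚ[X]) = 0 := by
      simp only [map_add, map_pow, aeval_X, map_one]
      linear_combination hω2
    -- linear independence of 1, ω over ℚ
    have hind : ∀ a b : ℚ, algebraMap ℚ L a + algebraMap ℚ L b * ω = 0 →
        a = 0 ∧ b = 0 := by
      intro a b hz
      by_cases hb : b = 0
      · refine ⟨?_, hb⟩
        rw [hb] at hz
        simp only [map_zero, zero_mul, add_zero] at hz
        exact (map_eq_zero_iff _ (algebraMap ℚ L).injective).mp hz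
      · exfalso
        have hbω : algebraMap ℚ L b * ω = - algebraMap ℚ L a := by
          linear_combination hz
        have hker : algebraMap ℚ L (a ^ 2 - a * b + b ^ 2) = 0 := by
          rw [map_add, map_sub, map_mul, map_pow, map_pow]
          linear_combination (algebraMap ℚ L b) ^ 2 * hω2 + (algebraMap ℚ L a
            - algebraMap ℚ L b - algebraMap ℚ L b * ω) * hbω
        have hrat : a ^ 2 - a * b + b ^ 2 = 0 :=
          (map_eq_zero_iff _ (algebraMap ℚ L).injective).mp hker
        have hb2 : 0 < b ^ 2 := by positivity
        nlinarith [sq_nonneg (a - b), sq_nonneg a, hb2]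
    -- write β = u + v ω
    have hmem' : β ∈ Algebra.adjoin ℚ {ω} := by
      rw [← IntermediateField.adjoin_simple_toSubalgebra_of_isAlgebraic hωint.isAlgebraic]
      exact hmem
    obtain ⟨g, hg⟩ : ∃ g : ℚ[X], (Polynomial.aeval ω) g = β := by
      rwa [← AlgHom.mem_range, ← Algebra.adjoin_singleton_eq_range_aeval]
    set R : ℚ[X] := g %ₘ (X ^ 2 + X + 1) with hRdef
    have hd2 : (X ^ 2 + X + 1 : ℚ[X]).natDegree = 2 := by compute_degree!
    have hdeg : R.natDegree < 2 := by
      have h1 := natDegree_modByMonic_lt g hmonic (fun h => by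
        have := congrArg Polynomial.natDegree h
        rw [hd2] at this
        simp at this)
      rwa [hd2] at h1
    have hβR : (Polynomial.aeval ω) R = β := by
      rw [hRdef, modByMonic_eq_sub_mul_div g _, map_sub, map_mul, haev, zero_mul,
        sub_zero, hg]
    set u := R.coeff 0
    set v := R.coeff 1
    have hbeta : β = algebraMap ℚ L u + algebraMap ℚ L v * ω := by
      rw [← hβR, Polynomial.aeval_eq_sum_range' hdeg]
      simp [Finset.sum_range_succ, Algebra.smul_def]
      rfl
    have hexp : β ^ 3 = algebraMap ℚ L (u^3 - 3*u*v^2 + v^3)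
        + algebraMap ℚ L (3*u^2*v - 3*u*v^2) * ω := by
      rw [hbeta]
      simp only [map_add, map_mul, map_pow, map_sub, map_ofNat]
      linear_combination (3 * algebraMap ℚ L u * algebraMap ℚ L v ^ 2
        + algebraMap ℚ L v ^ 3 * (ω - 1)) * hω2
    obtain ⟨e0, e1⟩ := hind (u^3 - 3*u*v^2 + v^3 - q) (3*u^2*v - 3*u*v^2) (by
      rw [map_sub]
      linear_combination hq - hexp)
    have e1' : u * v * (u - v) = 0 := by linear_combination (1/3 : ℚ) * e1
    have hr : ∃ r : ℚ, r ^ 3 = q := by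
      rcases mul_eq_zero.mp e1' with h' | huv
      · rcases mul_eq_zero.mp h' with hu | hv
        · exact ⟨v, by linear_combination e0 + (3*v^2 - u^2) * hu⟩
        · exact ⟨u, by linear_combination e0 + (3*u*v - v^2) * hv⟩
      · exact ⟨-u, by linear_combination e0 - (2*u^2 + 2*u*v - v^2) * huv⟩
    obtain ⟨r, hr⟩ := hr
    exact ⟨r, 1, one_ne_zero, fun pp hpp hdvd => (hpp.ne_one (Nat.dvd_one.mp hdvd)).elim,
      by rw [Nat.cast_one, mul_one, hr]⟩
  | succ n ih =>
    intro hn q ⟨β, hmem, hq⟩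
    have hnk : n < k := hn
    set i : Fin k := ⟨n, hnk⟩ with hi
    haveI : Fact (p i).Prime := ⟨hp i⟩
    have hset : {j : Fin k | (j : ℕ) < n + 1} = insert i {j : Fin k | (j : ℕ) < n} := by
      ext j
      simp only [Set.mem_setOf_eq, Set.mem_insert_iff]
      constructor
      · intro hj
        rcases Nat.lt_succ_iff_lt_or_eq.mp hj with h | h
        · exact Or.inr h
        · exact Or.inl (Fin.ext h)
      · rintro (h | h)
        · rw [h]; exact Nat.lt_succ_self n
        · exact Nat.lt_succ_of_lt h
    set Kn := IntermediateField.adjoin ℚ ({ω} ∪ c '' {j : Fin k | (j : ℕ) < n}) with hKn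
    haveI : CharZero Kn := charZero_of_injective_algebraMap (algebraMap ℚ Kn).injective
    have hpi0 : ((p i : ℚ)) ≠ 0 := Nat.cast_ne_zero.mpr (hp i).ne_zero
    -- p i is not a cube in Kn
    have hnocube : ∀ r : Kn, r ^ 3 ≠ (p i : Kn) := by
      intro r hr
      have hrL : (r : L) ^ 3 = algebraMap ℚ L ((p i : ℚ)) := by
        have h1 : ((r ^ 3 : Kn) : L) = ((p i : Kn) : L) := congrArg _ hr
        push_cast at h1
        rw [h1]
        simp
      obtain ⟨s, N, hN0, hNdvd, hsN⟩ := ih (le_of_lt hnk) (p i : ℚ) ⟨r, r.2, hrL⟩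
      have hs0 : s ≠ 0 := by
        intro h
        apply hpi0
        rw [hsN, h]
        ring
      have hnd : ¬ (p i) ∣ N := by
        intro hdvd
        obtain ⟨j, hjlt, hpj⟩ := hNdvd (p i) (hp i) hdvd
        have hji : j = i := hinj hpj
        rw [hji] at hjlt
        simp [hi] at hjlt
      have hval := congrArg (padicValRat (p i)) hsN
      rw [padicValRat.self (hp i).one_lt] at hval
      rw [padicValRat.mul (pow_ne_zero 3 hs0) (Nat.cast_ne_zero.mpr hN0),
        padicValRat.pow (q := s), padicValRat.of_nat,
        padicValNat.eq_zero_of_not_dvd hnd] at hval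
      omega
    -- identify the field at level n+1
    have hciKn : β ∈ Algebra.adjoin Kn {c i} := by
      have hint : IsIntegral Kn (c i) := by
        refine ⟨X ^ 3 - C (p i : Kn), monic_X_pow_sub_C _ (by norm_num), ?_⟩
        simp only [eval₂_sub, eval₂_pow, eval₂_X, eval₂_C]
        rw [hc i]
        simp
      rw [← IntermediateField.adjoin_simple_toSubalgebra_of_isAlgebraic hint.isAlgebraic]
      rw [hset, Set.image_insert_eq, Set.union_insert, ← Set.union_singleton,
        ← IntermediateField.adjoin_adjoin_left] at hmem
      exact hmem
    -- apply the Kummer lemma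
    have hαKn : (c i) ^ 3 = algebraMap Kn L ((p i : Kn)) := by rw [map_natCast]; exact hc i
    have hbKn : β ^ 3 = algebraMap Kn L (algebraMap ℚ Kn q) := by
      rw [← IsScalarTower.algebraMap_apply]; exact hq
    obtain ⟨r, hcase⟩ := cube_kummer hnocube hαKn hciKn hbKn
    -- uniform handling of the three cases
    have hcase' : ∃ j : ℕ, j ≤ 2 ∧ algebraMap ℚ Kn q = r ^ 3 * (p i : Kn) ^ j := by
      rcases hcase with h | h | h
      · exact ⟨0, by norm_num, by rw [h]; ring⟩
      · exact ⟨1, by norm_num, by rw [h]; ring⟩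
      · exact ⟨2, by norm_num, by rw [h]⟩
    obtain ⟨j, hj2, hqr⟩ := hcase'
    have hpiKn : ((p i : Kn)) ^ j ≠ 0 := pow_ne_zero _ (Nat.cast_ne_zero.mpr (hp i).ne_zero)
    set q' : ℚ := q / (p i : ℚ) ^ j with hq'def
    have hq'mul : q' * (p i : ℚ) ^ j = q := div_mul_cancel₀ q (pow_ne_zero _ hpi0)
    have hr3 : r ^ 3 = algebraMap ℚ Kn q' := by
      have h1 : algebraMap ℚ Kn q' * (p i : Kn) ^ j = algebraMap ℚ Kn q := by
        rw [← hq'mul, map_mul, map_pow, map_natCast]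
      have h2 : r ^ 3 * (p i : Kn) ^ j = algebraMap ℚ Kn q' * (p i : Kn) ^ j := by
        rw [h1, ← hqr]
      exact mul_right_cancel₀ hpiKn h2
    have hrmem : ∃ β' : L, β' ∈ Kn ∧ β' ^ 3 = algebraMap ℚ L q' := by
      refine ⟨(r : L), r.2, ?_⟩
      have h1 : ((r ^ 3 : Kn) : L) = ((algebraMap ℚ Kn q' : Kn) : L) := congrArg _ hr3
      push_cast at h1
      rw [h1]
      rw [IsScalarTower.algebraMap_apply ℚ Kn L]
      rfl
    obtain ⟨s, N, hN0, hNdvd, hsN⟩ := ih (le_of_lt hnk) q' hrmem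
    refine ⟨s, N * p i ^ j, mul_ne_zero hN0 (pow_ne_zero _ (hp i).ne_zero), ?_, ?_⟩
    · intro pp hpp hdvd
      rcases (Nat.Prime.dvd_mul hpp).mp hdvd with h | h
      · obtain ⟨jj, hjj, hpjj⟩ := hNdvd pp hpp h
        exact ⟨jj, Nat.lt_succ_of_lt hjj, hpjj⟩
      · have := hpp.dvd_of_dvd_pow h
        have heq : pp = p i := ((Nat.prime_dvd_prime_iff_eq hpp (hp i)).mp this)
        exact ⟨i, by simp [hi], heq.symm⟩
    · rw [← hq'mul, hsN]
      push_cast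
      ring


open WeierstrassCurve.Affine WeierstrassCurve.Affine.Point


section Curve
variable {L : Type*} [Field L] [CharZero L] [DecidableEq L]

omit [CharZero L] in
lemma cc_equation {x y : L} : (cubeCurve L).Equation x y ↔ y ^ 2 = x ^ 3 + 1 := by
  rw [equation_iff]; simp [cubeCurve]

omit [CharZero L] in
lemma cc_negY (x y : L) : (cubeCurve L).negY x y = -y := by
  simp [cubeCurve, WeierstrassCurve.Affine.negY]

lemma cc_nonsingular {x y : L} :
    (cubeCurve L).Nonsingular x y ↔ y ^ 2 = x ^ 3 + 1 ∧ (x ≠ 0 ∨ y ≠ 0) := by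
  rw [nonsingular_iff, cc_equation]
  apply and_congr_right'
  simp only [cubeCurve, zero_mul, mul_zero, add_zero, zero_add, sub_zero, ne_eq]
  constructor
  · rintro (h | h)
    · left; intro hx; exact h (by rw [hx]; ring)
    · right; intro hy; exact h (by rw [hy]; ring)
  · rintro (h | h)
    · left; intro hq
      exact h (pow_eq_zero_iff two_ne_zero |>.mp (by linear_combination (-1/3 : L) * hq))
    · right; intro hq
      exact h (by linear_combination (1/2 : L) * hq)

omit [CharZero L] in
lemma some_eq_some {x₁ y₁ x₂ y₂ : L} (hx : x₁ = x₂) (hy : y₁ = y₂)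
    (h₁ : (cubeCurve L).Nonsingular x₁ y₁) (h₂ : (cubeCurve L).Nonsingular x₂ y₂) :
    Point.some _ _ h₁ = Point.some _ _ h₂ := by subst hx; subst hy; rfl

variable {ω : L} (hω3 : ω ^ 3 = 1) (hω1 : ω ≠ 1)

omit [CharZero L] in
include hω3 in
lemma omega_ne_zero : ω ≠ 0 := by
  intro h; rw [h] at hω3; simp at hω3

omit [CharZero L] in
include hω3 hω1 in
lemma omega_sum : ω ^ 2 + ω + 1 = 0 := by
  have := sub_ne_zero.mpr hω1
  have h : (ω - 1) * (ω ^ 2 + ω + 1) = 0 := by linear_combination hω3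
  rcases mul_eq_zero.mp h with h | h
  · exact absurd h this
  · exact h

include hω3 in
lemma ns_omega {x y : L} (h : (cubeCurve L).Nonsingular x y) :
    (cubeCurve L).Nonsingular (ω * x) y := by
  rw [cc_nonsingular] at h ⊢
  refine ⟨by rw [mul_pow, hω3, one_mul]; exact h.1, ?_⟩
  rcases h.2 with hx | hy
  · exact Or.inl (mul_ne_zero (omega_ne_zero hω3) hx)
  · exact Or.inr hy

/-- The CM endomorphism `(x, y) ↦ (ωx, y)` on points. -/
noncomputable def phiF : (cubeCurve L).Point → (cubeCurve L).Point
  | .zero => .zero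
  | .some _ _ h => .some _ _ (ns_omega hω3 h)

@[simp] lemma phiF_zero : phiF hω3 (0 : (cubeCurve L).Point) = 0 := rfl

@[simp] lemma phiF_zero' : phiF hω3 (Point.zero : (cubeCurve L).Point) = 0 := rfl

@[simp] lemma phiF_some {x y : L} (h : (cubeCurve L).Nonsingular x y) :
    phiF hω3 (Point.some _ _ h) = Point.some _ _ (ns_omega hω3 h) := rfl

include hω3 in
lemma slope_omega (x₁ x₂ y₁ y₂ : L) :
    (cubeCurve L).slope (ω * x₁) (ω * x₂) y₁ y₂ = ω ^ 2 * (cubeCurve L).slope x₁ x₂ y₁ y₂ := by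
  have hω0 : ω ≠ 0 := omega_ne_zero hω3
  by_cases hx : x₁ = x₂
  · by_cases hy : y₁ = (cubeCurve L).negY x₂ y₂
    · rw [slope_of_Y_eq (by rw [hx]) (by rwa [cc_negY] at hy ⊢),
        slope_of_Y_eq hx hy, mul_zero]
    · rw [slope_of_Y_ne (by rw [hx]) (by rwa [cc_negY] at hy ⊢),
        slope_of_Y_ne hx hy]
      subst hx
      simp only [cc_negY]
      by_cases hy1 : y₁ = 0
      · subst hy1; simp [cubeCurve]
      · have h2y : y₁ - -y₁ ≠ 0 := by intro h; exact hy1 (by linear_combination (1/2:L) * h)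
        simp only [cubeCurve]
        field_simp
        ring
  · have hx' : ω * x₁ ≠ ω * x₂ := fun hc => hx (mul_left_cancel₀ hω0 hc)
    rw [slope_of_X_ne hx', slope_of_X_ne hx]
    have h12 : x₁ - x₂ ≠ 0 := sub_ne_zero.mpr hx
    have h12' : ω * x₁ - ω * x₂ ≠ 0 := sub_ne_zero.mpr hx'
    rw [mul_comm (ω ^ 2), div_mul_eq_mul_div, div_eq_div_iff h12' h12]
    linear_combination (-(y₁ - y₂) * (x₁ - x₂)) * hω3

include hω3 in
omit [CharZero L] in
lemma addX_omega (x₁ x₂ l : L) :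
    (cubeCurve L).addX (ω * x₁) (ω * x₂) (ω ^ 2 * l) = ω * (cubeCurve L).addX x₁ x₂ l := by
  simp only [WeierstrassCurve.Affine.addX, cubeCurve]
  ring_nf
  linear_combination (l ^ 2 * ω) * hω3

omit [CharZero L] in
include hω3 in
lemma negAddY_omega (x₁ x₂ y₁ l : L) :
    (cubeCurve L).negAddY (ω * x₁) (ω * x₂) y₁ (ω ^ 2 * l) = (cubeCurve L).negAddY x₁ x₂ y₁ l := by
  simp only [WeierstrassCurve.Affine.negAddY, WeierstrassCurve.Affine.addX, cubeCurve]
  ring_nf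
  linear_combination (l ^ 3 * (ω ^ 3 + 1) - 2 * l * x₁ - l * x₂) * hω3

omit [CharZero L] in
include hω3 in
lemma addY_omega (x₁ x₂ y₁ l : L) :
    (cubeCurve L).addY (ω * x₁) (ω * x₂) y₁ (ω ^ 2 * l) = (cubeCurve L).addY x₁ x₂ y₁ l := by
  rw [WeierstrassCurve.Affine.addY, WeierstrassCurve.Affine.addY, cc_negY, cc_negY,
    negAddY_omega hω3]

include hω3 hω1 in
lemma phi_add (P Q : (cubeCurve L).Point) :
    phiF hω3 (P + Q) = phiF hω3 P + phiF hω3 Q := by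
  have hω0 : ω ≠ 0 := omega_ne_zero hω3
  cases P with
  | zero => simp [← zero_def]
  | @some x₁ y₁ h₁ =>
    cases Q with
    | zero => simp [← zero_def]
    | @some x₂ y₂ h₂ =>
      by_cases hxy : x₁ = x₂ ∧ y₁ = (cubeCurve L).negY x₂ y₂
      · rw [add_of_Y_eq hxy.1 hxy.2, phiF_some, phiF_some, phiF_zero,
          add_of_Y_eq (by rw [hxy.1]) (by rw [cc_negY]; rw [cc_negY] at hxy; exact hxy.2)]
      · have hxy' : x₁ = x₂ → y₁ ≠ (cubeCurve L).negY x₂ y₂ :=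
          fun hx hy => hxy ⟨hx, hy⟩
      
        have hxy'' : ω * x₁ = ω * x₂ → y₁ ≠ (cubeCurve L).negY (ω * x₂) y₂ := by
          intro hx hy
          rw [cc_negY] at hy
          exact hxy ⟨mul_left_cancel₀ hω0 hx, by rw [cc_negY]; exact hy⟩
        rw [add_some (fun h => hxy' h.1 h.2), phiF_some, phiF_some, phiF_some, add_some (fun h => hxy'' h.1 h.2)]
        exact some_eq_some
          (by rw [slope_omega hω3, addX_omega hω3])
          (by rw [slope_omega hω3, addY_omega hω3]) _ _

include hω1 in
lemma phi_orbit (P : (cubeCurve L).Point) :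
    P + phiF hω3 P + phiF hω3 (phiF hω3 P) = 0 := by
  have hω0 : ω ≠ 0 := omega_ne_zero hω3
  have hsum : ω ^ 2 + ω + 1 = 0 := omega_sum hω3 hω1
  cases P with
  | zero => simp [zero_def]
  | @some x y h =>
    rw [phiF_some, phiF_some]
    have heq : y ^ 2 = x ^ 3 + 1 := (cc_nonsingular.mp h).1
    by_cases hx0 : x = 0
    · subst hx0
      have hy0 : y ≠ 0 := by
        rcases (cc_nonsingular.mp h).2 with h' | h'
        · exact absurd rfl h'
        · exact h'
      have hyne : y ≠ (cubeCurve L).negY 0 y := by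
        rw [cc_negY]; intro hy; exact hy0 (by linear_combination (1/2 : L) * hy)
      have eB : Point.some _ _ (ns_omega hω3 h) = Point.some _ _ h :=
        some_eq_some (by ring) rfl _ _
      have eC : Point.some _ _ (ns_omega hω3 (ns_omega hω3 h)) = Point.some _ _ h :=
        some_eq_some (by ring) rfl _ _
      rw [eB, eC]
      have hs : (cubeCurve L).slope 0 0 y y = 0 := by
        rw [slope_of_Y_ne rfl hyne]
        simp [cubeCurve]
      have hnsy : (cubeCurve L).Nonsingular 0 (-y) :=
        cc_nonsingular.mpr ⟨by linear_combination heq, Or.inr (neg_ne_zero.mpr hy0)⟩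
      have hD : Point.some _ _ h + Point.some _ _ h = Point.some _ _ hnsy := by
        rw [add_self_of_Y_ne hyne]
        refine some_eq_some ?_ ?_ _ _
        · rw [hs]; simp [cubeCurve, WeierstrassCurve.Affine.addX]
        · rw [hs, WeierstrassCurve.Affine.addY, cc_negY, WeierstrassCurve.Affine.negAddY]
          ring
      rw [hD]
      exact add_of_Y_eq rfl (by rw [cc_negY])
    · have hxne : x ≠ ω * x := by
        intro hc
        have h2 : x * (1 - ω) = 0 := by linear_combination hc
        rcases mul_eq_zero.mp h2 with h' | h'
        · exact hx0 h'
        · exact hω1 (by linear_combination -h')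
      have hs : (cubeCurve L).slope x (ω * x) y y = 0 := by
        rw [slope_of_X_ne hxne, sub_self, zero_div]
      have hnsE : (cubeCurve L).Nonsingular (ω * (ω * x)) (-y) :=
        cc_nonsingular.mpr ⟨by linear_combination heq - (x ^ 3 * (ω ^ 3 + 1)) * hω3,
          Or.inl (mul_ne_zero hω0 (mul_ne_zero hω0 hx0))⟩
      have hE : Point.some _ _ h + Point.some _ _ (ns_omega hω3 h) = Point.some _ _ hnsE := by
        rw [add_of_X_ne hxne]
        refine some_eq_some ?_ ?_ _ _
        · rw [hs]
          simp only [cubeCurve, WeierstrassCurve.Affine.addX]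
          linear_combination (-x) * hsum
        · rw [hs, WeierstrassCurve.Affine.addY, cc_negY, WeierstrassCurve.Affine.negAddY]
          ring
      rw [hE]
      exact add_of_Y_eq rfl (by rw [cc_negY])

/-- φ as an additive group homomorphism. -/
noncomputable def phiHom : (cubeCurve L).Point →+ (cubeCurve L).Point :=
  AddMonoidHom.mk' (phiF hω3) (phi_add hω3 hω1)

@[simp] lemma phiHom_apply (P : (cubeCurve L).Point) : phiHom hω3 hω1 P = phiF hω3 P := rfl

/-- π = 1 - φ as an additive group homomorphism. -/
noncomputable def piHom : (cubeCurve L).Point →+ (cubeCurve L).Point :=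
  AddMonoidHom.id _ - phiHom hω3 hω1

@[simp] lemma piHom_apply (P : (cubeCurve L).Point) :
    piHom hω3 hω1 P = P - phiF hω3 P := rfl

include hω1 in
lemma phi_sq (P : (cubeCurve L).Point) :
    phiF hω3 (phiF hω3 P) = -P - phiF hω3 P := by
  have h := phi_orbit hω3 hω1 P
  have h2 : phiF hω3 (phiF hω3 P) = 0 - (P + phiF hω3 P) := by rw [← h]; abel
  rw [h2]; abel

lemma pi_pi (P : (cubeCurve L).Point) :
    piHom hω3 hω1 (piHom hω3 hω1 P) = -((3 : ℕ) • phiF hω3 P) := by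
  have hφ : phiF hω3 (P - phiF hω3 P) = phiF hω3 P - phiF hω3 (phiF hω3 P) :=
    map_sub (phiHom hω3 hω1) P (phiF hω3 P)
  rw [piHom_apply, piHom_apply, hφ, phi_sq hω3 hω1 P,
    show ((3:ℕ) • phiF hω3 P) = phiF hω3 P + phiF hω3 P + phiF hω3 P by
      rw [show (3:ℕ) = 2 + 1 by norm_num, add_nsmul, two_nsmul, one_nsmul]]
  abel

lemma pow3_to_pi : ∀ (m : ℕ) (P : (cubeCurve L).Point), 3 ^ m • P = 0 →
    (⇑(piHom hω3 hω1))^[2 * m] P = 0 := by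
  intro m
  induction m with
  | zero => intro P h; simpa using h
  | succ m ih =>
    intro P h
    have hQ : 3 ^ m • (piHom hω3 hω1 (piHom hω3 hω1 P)) = 0 := by
      rw [pi_pi hω3 hω1 P, smul_neg, smul_smul, ← pow_succ,
        show (3 ^ (m + 1) • phiF hω3 P) = phiHom hω3 hω1 (3 ^ (m+1) • P) by
          rw [AddMonoidHom.map_nsmul]; rfl,
        h, AddMonoidHom.map_zero, _root_.neg_zero]
    have := ih _ hQ
    rw [show 2 * (m + 1) = 2 * m + 2 by ring, Function.iterate_add_apply]
    rw [show (⇑(piHom hω3 hω1))^[2] P = piHom hω3 hω1 (piHom hω3 hω1 P) by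
      simp [Function.iterate_succ_apply']]
    exact this

include hω1 in
lemma pi_descent (h2 : ∀ t : L, t ^ 3 ≠ 2) : ∀ (n : ℕ) (P : (cubeCurve L).Point),
    (⇑(piHom hω3 hω1))^[n] P = 0 →
    P = 0 ∨ ∃ (x y : L) (h : (cubeCurve L).Nonsingular x y),
      P = Point.some x y h ∧ ((x, y) = (0, 1) ∨ (x, y) = (0, -1)) := by
  have hω0 : ω ≠ 0 := omega_ne_zero hω3
  have hsum : ω ^ 2 + ω + 1 = 0 := omega_sum hω3 hω1
  intro n
  induction n with
  | zero => intro P h; exact Or.inl h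
  | succ n ih =>
    intro P h
    rw [Function.iterate_succ_apply] at h
    have hS := ih _ h
    cases P with
    | zero => exact Or.inl rfl
    | @some x y hns =>
      right
      have heq : y ^ 2 = x ^ 3 + 1 := (cc_nonsingular.mp hns).1
      by_cases hx0 : x = 0
      · subst hx0
        refine ⟨0, y, hns, rfl, ?_⟩
        have h1 : (y - 1) * (y + 1) = 0 := by linear_combination heq
        rcases mul_eq_zero.mp h1 with h' | h'
        · left; rw [sub_eq_zero.mp h']
        · right; rw [show y = -1 by linear_combination h']
      · exfalso
        -- compute π P explicitly
        have hxne : x ≠ ω * x := by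
          intro hc
          have hz : x * (1 - ω) = 0 := by linear_combination hc
          rcases mul_eq_zero.mp hz with h' | h'
          · exact hx0 h'
          · exact hω1 (by linear_combination -h')
        have hneg : (cubeCurve L).Nonsingular (ω * x) (-y) := by
          rw [← cc_negY (ω * x) y]
          exact (nonsingular_neg _ _).mpr (ns_omega hω3 hns)
        have hnegeq : -Point.some _ _ (ns_omega hω3 hns) = Point.some _ _ hneg := by
          rw [neg_some]
          exact some_eq_some rfl (cc_negY _ _) _ _
        have hπ : piHom hω3 hω1 (Point.some _ _ hns) =
            Point.some _ _ (nonsingular_add hns hneg (fun hc => (hxne hc.1).elim)) := by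
          rw [piHom_apply, phiF_some, sub_eq_add_neg, hnegeq, add_of_X_ne hxne]
        rcases hS with hz | ⟨x', y', h', hPeq, hxy'⟩
        · rw [hπ] at hz
          exact some_ne_zero _ hz
        · have hx' : x' = 0 := by
            rcases hxy' with h'' | h'' <;>
              simpa using congrArg Prod.fst h''
          rw [hπ] at hPeq
          have hxcoord : (cubeCurve L).addX x (ω * x)
              ((cubeCurve L).slope x (ω * x) y (-y)) = 0 := by
            have := hPeq
            simp only [Point.some.injEq] at this
            rw [this.1, hx']
          rw [slope_of_X_ne hxne] at hxcoord
          have hxωx : x - ω * x ≠ 0 := sub_ne_zero.mpr hxne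
          simp only [cubeCurve, WeierstrassCurve.Affine.addX] at hxcoord
          have h4 : 4 * y ^ 2 = 3 * x ^ 3 := by
            field_simp at hxcoord
            linear_combination hxcoord + (x ^ 3) * hω3 - (x ^ 3) * hsum
          have hx3 : x ^ 3 = -4 := by linear_combination h4 - 4 * heq
          exact h2 (x ^ 2 / 2) (by field_simp; linear_combination (x ^ 3 - 4) * hx3)


end Curve

end Curve

open Classical in
open WeierstrassCurve.Affine WeierstrassCurve.Affine.Point in
/-- Let `p₁, …, p_k` be distinct odd primes each `≡ 2, 5 (mod 9)`, and let
`L = ℚ(ω, ∛p₁, …, ∛p_k)` where `ω` is a primitive third root of unity.  Every `3`-power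
torsion point of `E : y² = x³ + 1` over `L` is one of `O`, `(0, 1)`, `(0, -1)`; in
particular it is defined over `K = ℚ(ω)`. -/
theorem three_power_torsion_over_genus_field (k : ℕ) (p : Fin k → ℕ)
    (hinj : Function.Injective p) (hp : ∀ i, (p i).Prime) (hodd : ∀ i, Odd (p i))
    (hmod : ∀ i, p i % 9 = 2 ∨ p i % 9 = 5)
    (L : Type*) [Field L] [Algebra ℚ L] (ω : L) (hω : IsPrimitiveRoot ω 3)
    (c : Fin k → L) (hc : ∀ i, c i ^ 3 = (p i : L))
    (hgen : (⊤ : IntermediateField ℚ L) = IntermediateField.adjoin ℚ ({ω} ∪ Set.range c))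
    (P : (cubeCurve L).Point) (hP : ∃ m : ℕ, 3 ^ m • P = 0) :
    P = 0 ∨ ∃ (x y : L) (h : (cubeCurve L).Nonsingular x y),
      P = WeierstrassCurve.Affine.Point.some x y h ∧ ((x, y) = (0, 1) ∨ (x, y) = (0, -1)) := by
  haveI : CharZero L := charZero_of_injective_algebraMap (algebraMap ℚ L).injective
  have hω1 : ω ≠ 1 := hω.ne_one (by norm_num)
  have hω3 : ω ^ 3 = 1 := hω.pow_eq_one
  have hω2 : ω ^ 2 + ω + 1 = 0 := omega_sum hω3 hω1
  -- 2 is not a cube in L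
  have h2 : ∀ t : L, t ^ 3 ≠ 2 := by
    intro t ht
    have hrange : c '' {i : Fin k | (i : ℕ) < k} = Set.range c := by
      ext x
      simp only [Set.mem_image, Set.mem_setOf_eq, Set.mem_range]
      exact ⟨fun ⟨i, _, h⟩ => ⟨i, h⟩, fun ⟨i, h⟩ => ⟨i, i.isLt, h⟩⟩
    have hmem : t ∈ IntermediateField.adjoin ℚ ({ω} ∪ c '' {i : Fin k | (i : ℕ) < k}) := by
      rw [hrange, ← hgen]
      trivial
    have ht' : t ^ 3 = algebraMap ℚ L (2 : ℚ) := by rw [ht]; norm_num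
    obtain ⟨r, N, hN0, hNdvd, hq⟩ :=
      tower_cube_classify hinj hp hc hω2 k le_rfl 2 ⟨t, hmem, ht'⟩
    have hnd : ¬ 2 ∣ N := by
      intro h
      obtain ⟨i, _, hpi⟩ := hNdvd 2 Nat.prime_two h
      have := hodd i
      rw [hpi] at this
      obtain ⟨m, hm⟩ := this
      omega
    have hr0 : r ≠ 0 := by
      intro h
      rw [h] at hq
      norm_num at hq
    have hval := congrArg (padicValRat 2) hq
    have h21 : ((2 : ℚ)) = ((2 : ℕ) : ℚ) := by norm_num
    rw [h21, padicValRat.self (by norm_num),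
      padicValRat.mul (pow_ne_zero 3 hr0) (Nat.cast_ne_zero.mpr hN0),
      padicValRat.pow (q := r), padicValRat.of_nat,
      padicValNat.eq_zero_of_not_dvd hnd] at hval
    omega
  obtain ⟨m, hm⟩ := hP
  exact pi_descent hω3 hω1 h2 (2 * m) P (pow3_to_pi hω3 hω1 m P hm)
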